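/- For every natural number n, if v is a von Neumann numeral and z is a Zermelo numeral (as hereditarily finite sets), then Pⁿ(TC({v})) ∩ Pⁿ(TC({z})) ⊆ P^{n+2}(∅), where P denotes the power set operation iterated n times and TC denotes transitive closure. -/

import Mathlib

open ZFSet

/-- The `n`-th von Neumann numeral: `0 = ∅`, `S x = x ∪ {x}`. -/
def vonNeumann : ℕ → ZFSet
  | 0 => ∅
  | n + 1 => insert (vonNeumann n) (vonNeumann n)

/-- The `n`-th Zermelo numeral: `0 = ∅`, `σ x = {x}`. -/
def zermelo : ℕ → ZFSet
  | 0 => ∅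
  | n + 1 => {zermelo n}

/-- The `n`-fold iterated union of a set. -/
def iterUnion : ℕ → ZFSet → ZFSet
  | 0, A => A
  | n + 1, A => ⋃₀ iterUnion n A

/-- The transitive closure of `A`: the smallest transitive set containing all
elements of `A`. -/
noncomputable def TClos (A : ZFSet) : ZFSet :=
  ⋃₀ ZFSet.range fun n : ℕ => iterUnion n A

/-- The `n`-fold iterated power set. -/
def iterPow : ℕ → ZFSet → ZFSet
  | 0, A => A
  | n + 1, A => ZFSet.powerset (iterPow n A)

lemma mem_vonNeumann {x : ZFSet} : ∀ {j : ℕ}, x ∈ _root_.vonNeumann j → ∃ i, x = _root_.vonNeumann i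
  | 0, h => absurd h (ZFSet.notMem_empty x)
  | j + 1, h => by
      rcases ZFSet.mem_insert_iff.1 h with h | h
      · exact ⟨j, h⟩
      · exact mem_vonNeumann h

lemma mem_zermelo {x : ZFSet} : ∀ {j : ℕ}, x ∈ zermelo j → ∃ i, x = zermelo i
  | 0, h => absurd h (ZFSet.notMem_empty x)
  | j + 1, h => ⟨j, ZFSet.mem_singleton.1 h⟩

lemma iterUnion_vn (k : ℕ) : ∀ (n : ℕ) {x : ZFSet},
    x ∈ iterUnion n {_root_.vonNeumann k} → ∃ j, x = _root_.vonNeumann j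
  | 0, x, h => ⟨k, ZFSet.mem_singleton.1 h⟩
  | n + 1, x, h => by
      rcases ZFSet.mem_sUnion.1 h with ⟨y, hy, hxy⟩
      obtain ⟨j, rfl⟩ := iterUnion_vn k n hy
      exact mem_vonNeumann hxy

lemma iterUnion_z (m : ℕ) : ∀ (n : ℕ) {x : ZFSet},
    x ∈ iterUnion n {zermelo m} → ∃ j, x = zermelo j
  | 0, x, h => ⟨m, ZFSet.mem_singleton.1 h⟩
  | n + 1, x, h => by
      rcases ZFSet.mem_sUnion.1 h with ⟨y, hy, hxy⟩
      obtain ⟨j, rfl⟩ := iterUnion_z m n hy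
      exact mem_zermelo hxy

lemma tclos_vn {k : ℕ} {x : ZFSet} (h : x ∈ TClos {_root_.vonNeumann k}) :
    ∃ j, x = _root_.vonNeumann j := by
  rcases ZFSet.mem_sUnion.1 h with ⟨y, hy, hxy⟩
  rcases ZFSet.mem_range.1 hy with ⟨n, rfl⟩
  exact iterUnion_vn k n hxy

lemma tclos_z {m : ℕ} {x : ZFSet} (h : x ∈ TClos {zermelo m}) :
    ∃ j, x = zermelo j := by
  rcases ZFSet.mem_sUnion.1 h with ⟨y, hy, hxy⟩
  rcases ZFSet.mem_range.1 hy with ⟨n, rfl⟩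
  exact iterUnion_z m n hxy

lemma vn_eq_z {j i : ℕ} (h : _root_.vonNeumann j = zermelo i) :
    _root_.vonNeumann j = ∅ ∨ _root_.vonNeumann j = {(∅ : ZFSet)} := by
  match j with
  | 0 => exact Or.inl rfl
  | 1 =>
      right
      show insert (_root_.vonNeumann 0) (_root_.vonNeumann 0) = _
      ext y
      simp [_root_.vonNeumann, ZFSet.mem_insert_iff]
  | j + 2 =>
      exfalso
      -- vonNeumann (j+2) has two distinct elements v_{j+1} and v_j
      have h1 : _root_.vonNeumann (j + 1) ∈ _root_.vonNeumann (j + 2) := ZFSet.mem_insert _ _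
      have h2 : _root_.vonNeumann j ∈ _root_.vonNeumann (j + 2) :=
        ZFSet.mem_insert_of_mem _ (ZFSet.mem_insert _ _)
      have hne : _root_.vonNeumann (j + 1) ≠ _root_.vonNeumann j := by
        intro he
        have hm : _root_.vonNeumann j ∈ _root_.vonNeumann (j + 1) := ZFSet.mem_insert _ _
        rw [he] at hm
        exact ZFSet.mem_irrefl _ hm
      rw [h] at h1 h2
      match i with
      | 0 => exact ZFSet.notMem_empty _ h1
      | i + 1 =>
          have e1 := ZFSet.mem_singleton.1 h1
          have e2 := ZFSet.mem_singleton.1 h2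
          exact hne (e1.trans e2.symm)

lemma base_case {x : ZFSet} (hv : ∃ j, x = _root_.vonNeumann j) (hz : ∃ i, x = zermelo i) :
    x ∈ iterPow 2 (∅ : ZFSet) := by
  obtain ⟨j, rfl⟩ := hv
  obtain ⟨i, hi⟩ := hz
  have := vn_eq_z hi
  show _root_.vonNeumann j ∈ ZFSet.powerset (ZFSet.powerset ∅)
  rw [ZFSet.mem_powerset]
  rcases this with h | h <;> rw [h] <;> intro y hy
  · exact absurd hy (ZFSet.notMem_empty y)
  · rw [ZFSet.mem_singleton.1 hy, ZFSet.mem_powerset]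

/-- The VN–Z Splitting Lemma: for every `n`, if `v` is a von Neumann numeral
and `z` is a Zermelo numeral, then
`Pⁿ(TC({v})) ∩ Pⁿ(TC({z})) ⊆ P^{n+2}(∅)`. -/
theorem vn_z_splitting (n k m : ℕ) :
    iterPow n (TClos {_root_.vonNeumann k}) ∩ iterPow n (TClos {zermelo m}) ⊆
      iterPow (n + 2) (∅ : ZFSet) := by
  induction n with
  | zero =>
      intro x hx
      rcases ZFSet.mem_inter.1 hx with ⟨h1, h2⟩
      exact base_case (tclos_vn h1) (tclos_z h2)
  | succ n ih =>
      intro x hx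
      rcases ZFSet.mem_inter.1 hx with ⟨h1, h2⟩
      rw [iterPow, ZFSet.mem_powerset] at h1 h2
      show x ∈ ZFSet.powerset (iterPow (n + 2) ∅)
      rw [ZFSet.mem_powerset]
      intro y hy
      exact ih (ZFSet.mem_inter.2 ⟨h1 hy, h2 hy⟩)
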